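/- The distribution of the log odds ratio under the Jeffreys prior has mean 0 and variance 2π²: for the density f_W(w) = w/(π²(e^{w/2} − e^{-w/2})) (extended by 2/π² at w = 0), one has ∫_{-∞}^{∞} f_W(w) dw = 1, ∫_{-∞}^{∞} w·f_W(w) dw = 0, and ∫_{-∞}^{∞} w²·f_W(w) dw = 2π². -/

import Mathlib

open Real MeasureTheory Set

/-- The density of the log odds ratio under the Jeffreys prior:
`w ↦ w/(π²(e^{w/2} − e^{-w/2}))` for `w ≠ 0`, extended by its limit `2/π²` at `w = 0`. -/
noncomputable def logOddsRatioDensity (w : ℝ) : ℝ :=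
  if w = 0 then 2 / π ^ 2
  else w / (π ^ 2 * (Real.exp (w / 2) - Real.exp (-(w / 2))))

lemma logOddsRatioDensity_even (w : ℝ) :
    logOddsRatioDensity (-w) = logOddsRatioDensity w := by
  unfold logOddsRatioDensity
  rcases eq_or_ne w 0 with rfl | hw
  · norm_num
  · rw [if_neg (neg_ne_zero.mpr hw), if_neg hw]
    simp only [neg_div, neg_neg]
    have h : π ^ 2 * (Real.exp (-(w/2)) - Real.exp (w/2))
        = -(π ^ 2 * (Real.exp (w/2) - Real.exp (-(w/2)))) := by ring
    rw [h, div_neg, neg_neg]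

set_option maxHeartbeats 1000000 in
/-- Odd subseries of `∑ 1/n^p`. -/
lemma hasSum_odd_one_div_pow {p : ℕ} (hp : 1 ≤ p) {S : ℝ}
    (h : HasSum (fun n : ℕ => (1 : ℝ) / (n : ℝ) ^ p) S) :
    HasSum (fun n : ℕ => (1 : ℝ) / ((2 * n + 1 : ℕ) : ℝ) ^ p) (S - S / 2 ^ p) := by
  have hEven : HasSum (fun n : ℕ => (1 : ℝ) / ((2 * n : ℕ) : ℝ) ^ p) (S / 2 ^ p) := by
    have h2 := h.div_const (2 ^ p)
    have heq : (fun n : ℕ => (1 : ℝ) / ((2 * n : ℕ) : ℝ) ^ p)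
        = fun n : ℕ => ((1 : ℝ) / (n : ℝ) ^ p) / 2 ^ p := by
      funext n
      push_cast
      rw [mul_pow, div_div, mul_comm]
    rw [heq]
    exact h2
  have hOddS : Summable (fun n : ℕ => (1 : ℝ) / ((2 * n + 1 : ℕ) : ℝ) ^ p) :=
    h.summable.comp_injective (fun a b hab => by omega)
  have hOdd := hOddS.hasSum
  have htot := (hEven.even_add_odd hOdd).unique h
  have heq2 : (∑' n : ℕ, (1 : ℝ) / ((2 * n + 1 : ℕ) : ℝ) ^ p) = S - S / 2 ^ p := by linarith
  rwa [heq2] at hOdd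

lemma hasSum_odd_sq : HasSum (fun n : ℕ => (1 : ℝ) / ((2 * n + 1 : ℕ) : ℝ) ^ 2) (π ^ 2 / 8) := by
  have := hasSum_odd_one_div_pow (by norm_num) hasSum_zeta_two
  convert this using 1
  ring

lemma hasSum_odd_four : HasSum (fun n : ℕ => (1 : ℝ) / ((2 * n + 1 : ℕ) : ℝ) ^ 4) (π ^ 4 / 96) := by
  have := hasSum_odd_one_div_pow (by norm_num) hasSum_zeta_four
  convert this using 1
  ring

/-- Pointwise geometric expansion for `w > 0`. -/
lemma hasSum_expand {w : ℝ} (hw : 0 < w) (m : ℕ) :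
    HasSum (fun n : ℕ => w ^ m * Real.exp (-(((2 * n + 1 : ℕ) : ℝ) / 2 * w)))
      (w ^ m / (Real.exp (w / 2) - Real.exp (-(w / 2)))) := by
  have hr0 : (0 : ℝ) ≤ Real.exp (-w) := (Real.exp_pos _).le
  have hr1 : Real.exp (-w) < 1 := by
    rw [← Real.exp_zero]
    exact Real.exp_lt_exp.mpr (by linarith)
  have hgeo := (hasSum_geometric_of_lt_one hr0 hr1).mul_left (w ^ m * Real.exp (-(w / 2)))
  have hden : Real.exp (-(w / 2)) < Real.exp (w / 2) := Real.exp_lt_exp.mpr (by linarith)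
  have h1 : (1 : ℝ) - Real.exp (-w) ≠ 0 := sub_ne_zero.mpr hr1.ne'
  have hterm : (fun n : ℕ => w ^ m * Real.exp (-(((2 * n + 1 : ℕ) : ℝ) / 2 * w)))
      = fun n : ℕ => w ^ m * Real.exp (-(w / 2)) * Real.exp (-w) ^ n := by
    funext n
    rw [← Real.exp_nat_mul, mul_assoc, ← Real.exp_add]
    congr 1
    push_cast
    ring
  have hval : w ^ m * Real.exp (-(w / 2)) * (1 - Real.exp (-w))⁻¹
      = w ^ m / (Real.exp (w / 2) - Real.exp (-(w / 2))) := by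
    rw [eq_div_iff (sub_ne_zero.mpr hden.ne')]
    have key : Real.exp (w / 2) - Real.exp (-(w / 2)) = Real.exp (w / 2) * (1 - Real.exp (-w)) := by
      rw [mul_sub, mul_one, ← Real.exp_add]
      congr 2
      ring
    have e1 : Real.exp (-(w / 2)) * Real.exp (w / 2) = 1 := by
      rw [← Real.exp_add]; norm_num
    rw [key, show w ^ m * Real.exp (-(w / 2)) * (1 - Real.exp (-w))⁻¹ *
        (Real.exp (w / 2) * (1 - Real.exp (-w)))
      = w ^ m * (Real.exp (-(w / 2)) * Real.exp (w / 2)) *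
        ((1 - Real.exp (-w))⁻¹ * (1 - Real.exp (-w))) from by ring,
      e1, inv_mul_cancel₀ h1, mul_one, mul_one]
  rw [hterm, ← hval]
  exact hgeo

lemma term_integrable (m n : ℕ) :
    IntegrableOn (fun w : ℝ => w ^ m * Real.exp (-(((2 * n + 1 : ℕ) : ℝ) / 2 * w))) (Ioi 0) := by
  have hb : (0 : ℝ) < ((2 * n + 1 : ℕ) : ℝ) / 2 := by positivity
  have := integrableOn_rpow_mul_exp_neg_mul_rpow (p := 1) (s := (m : ℝ)) (b := ((2 * n + 1 : ℕ) : ℝ) / 2)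
    (lt_of_lt_of_le neg_one_lt_zero (Nat.cast_nonneg m)) zero_lt_one hb
  refine this.congr_fun (fun x hx => ?_) measurableSet_Ioi
  dsimp only
  rw [Real.rpow_natCast, Real.rpow_one]
  ring_nf

lemma term_integral (m n : ℕ) :
    ∫ w in Ioi (0 : ℝ), w ^ m * Real.exp (-(((2 * n + 1 : ℕ) : ℝ) / 2 * w))
      = (m.factorial : ℝ) * (2 / ((2 * n + 1 : ℕ) : ℝ)) ^ (m + 1) := by
  have hr : (0 : ℝ) < ((2 * n + 1 : ℕ) : ℝ) / 2 := by positivity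
  have h := Real.integral_rpow_mul_exp_neg_mul_Ioi (a := (m : ℝ) + 1) (by positivity) hr
  rw [add_sub_cancel_right] at h
  have hL : ∫ w in Ioi (0 : ℝ), w ^ ((m : ℝ)) * Real.exp (-(((2 * n + 1 : ℕ) : ℝ) / 2 * w))
      = ∫ w in Ioi (0 : ℝ), w ^ m * Real.exp (-(((2 * n + 1 : ℕ) : ℝ) / 2 * w)) := by
    refine setIntegral_congr_fun measurableSet_Ioi (fun x hx => ?_)
    rw [Real.rpow_natCast]
  rw [hL] at h
  have h2 : (1 : ℝ) / (((2 * n + 1 : ℕ) : ℝ) / 2) = 2 / ((2 * n + 1 : ℕ) : ℝ) := by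
    rw [one_div_div]
  have h3 : ((m : ℝ) + 1) = ((m + 1 : ℕ) : ℝ) := by push_cast; ring
  rw [Real.Gamma_nat_eq_factorial, h2, h3, Real.rpow_natCast] at h
  rw [h]
  ring

/-- The key integral over `(0,∞)`. -/
lemma integral_Ioi_key (m : ℕ) {T : ℝ}
    (hT : HasSum (fun n : ℕ => (1 : ℝ) / ((2 * n + 1 : ℕ) : ℝ) ^ (m + 1)) T) :
    ∫ w in Ioi (0 : ℝ), w ^ m / (Real.exp (w / 2) - Real.exp (-(w / 2)))
      = (m.factorial : ℝ) * 2 ^ (m + 1) * T := by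
  set F : ℕ → ℝ → ℝ := fun n w => w ^ m * Real.exp (-(((2 * n + 1 : ℕ) : ℝ) / 2 * w)) with hF
  have hInt : ∀ n, Integrable (F n) (volume.restrict (Ioi 0)) := fun n => term_integrable m n
  have hterm : ∀ n : ℕ, (m.factorial : ℝ) * (2 / ((2 * n + 1 : ℕ) : ℝ)) ^ (m + 1)
      = ((m.factorial : ℝ) * 2 ^ (m + 1)) * ((1 : ℝ) / ((2 * n + 1 : ℕ) : ℝ) ^ (m + 1)) := by
    intro n
    rw [div_pow]
    ring
  have hnorm : ∀ n : ℕ, ∫ w, ‖F n w‖ ∂(volume.restrict (Ioi 0))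
      = (m.factorial : ℝ) * (2 / ((2 * n + 1 : ℕ) : ℝ)) ^ (m + 1) := by
    intro n
    rw [← term_integral m n]
    refine setIntegral_congr_fun measurableSet_Ioi (fun x hx => ?_)
    have hx0 : (0 : ℝ) < x := hx
    rw [Real.norm_eq_abs, abs_of_nonneg (by positivity)]
  have hsum : Summable (fun n : ℕ => ∫ w, ‖F n w‖ ∂(volume.restrict (Ioi 0))) := by
    simp_rw [hnorm, hterm]
    exact hT.summable.mul_left _
  have hmain := MeasureTheory.hasSum_integral_of_summable_integral_norm hInt hsum
  have hintval : (∫ w, (∑' n, F n w) ∂(volume.restrict (Ioi 0)))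
      = ∫ w in Ioi (0 : ℝ), w ^ m / (Real.exp (w / 2) - Real.exp (-(w / 2))) := by
    refine setIntegral_congr_fun measurableSet_Ioi (fun x hx => ?_)
    exact (hasSum_expand hx m).tsum_eq
  rw [hintval] at hmain
  have hvals : (fun n : ℕ => ∫ w, F n w ∂(volume.restrict (Ioi 0)))
      = fun n : ℕ => ((m.factorial : ℝ) * 2 ^ (m + 1)) * ((1 : ℝ) / ((2 * n + 1 : ℕ) : ℝ) ^ (m + 1)) := by
    funext n
    rw [show (∫ w, F n w ∂(volume.restrict (Ioi 0))) = ∫ w in Ioi (0:ℝ), F n w from rfl,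
      term_integral m n, hterm]
  rw [hvals] at hmain
  exact hmain.unique (hT.mul_left _)

lemma pi_sq_ne : (π : ℝ) ^ 2 ≠ 0 := by positivity

/-- The Jeffreys-prior log odds ratio distribution integrates to one, has mean `0`,
and variance `2π²`. -/
theorem log_odds_ratio_moments :
    (∫ w : ℝ, logOddsRatioDensity w = 1) ∧
    (∫ w : ℝ, w * logOddsRatioDensity w = 0) ∧
    (∫ w : ℝ, w ^ 2 * logOddsRatioDensity w = 2 * π ^ 2) := by
  have habs0 : ∀ x : ℝ, logOddsRatioDensity |x| = logOddsRatioDensity x := by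
    intro x
    rcases abs_choice x with h | h
    · rw [h]
    · rw [h, logOddsRatioDensity_even]
  have hIoi : ∀ m : ℕ, m ≠ 0 → ∀ x ∈ Ioi (0 : ℝ), x ^ (m - 1) * logOddsRatioDensity x
      = (π ^ 2)⁻¹ * (x ^ m / (Real.exp (x / 2) - Real.exp (-(x / 2)))) := by
    intro m hm x hx
    have hx0 : (0 : ℝ) < x := hx
    unfold logOddsRatioDensity
    rw [if_neg hx0.ne']
    rw [div_mul_eq_div_div_swap, div_eq_inv_mul]
    rw [← mul_assoc, mul_comm (x ^ (m - 1)) ((π^2)⁻¹), mul_assoc]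
    congr 1
    rw [← mul_div_assoc]
    congr 1
    rw [← pow_succ]
    congr 1
    omega
  refine ⟨?_, ?_, ?_⟩
  · -- total mass
    have h1 : (∫ w : ℝ, logOddsRatioDensity w) = 2 * ∫ w in Ioi (0:ℝ), logOddsRatioDensity w := by
      rw [← integral_comp_abs (f := logOddsRatioDensity)]
      congr 1
      funext x
      rw [habs0]
    rw [h1]
    have h2 : (∫ w in Ioi (0:ℝ), logOddsRatioDensity w)
        = ∫ w in Ioi (0:ℝ), (π ^ 2)⁻¹ * (w ^ 1 / (Real.exp (w / 2) - Real.exp (-(w / 2)))) := by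
      refine setIntegral_congr_fun measurableSet_Ioi (fun x hx => ?_)
      have := hIoi 1 (by norm_num) x hx
      simpa using this
    rw [h2, integral_const_mul, integral_Ioi_key 1 hasSum_odd_sq]
    have hf : ((Nat.factorial 1 : ℕ) : ℝ) = 1 := by norm_num [Nat.factorial]
    rw [hf]
    field_simp
    norm_num
  · -- mean zero
    have hodd : ∀ x : ℝ, (-x) * logOddsRatioDensity (-x) = -(x * logOddsRatioDensity x) := by
      intro x
      rw [logOddsRatioDensity_even]
      ring
    have h1 : (∫ x : ℝ, (-x) * logOddsRatioDensity (-x)) = ∫ x : ℝ, x * logOddsRatioDensity x :=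
      integral_neg_eq_self (fun y : ℝ => y * logOddsRatioDensity y) volume
    have h2 : (∫ x : ℝ, (-x) * logOddsRatioDensity (-x))
        = -∫ x : ℝ, x * logOddsRatioDensity x := by
      simp_rw [hodd]
      exact integral_neg _
    linarith [h1.symm.trans h2]
  · -- second moment
    have h1 : (∫ w : ℝ, w ^ 2 * logOddsRatioDensity w)
        = 2 * ∫ w in Ioi (0:ℝ), w ^ 2 * logOddsRatioDensity w := by
      rw [← integral_comp_abs (f := fun w => w ^ 2 * logOddsRatioDensity w)]
      congr 1
      funext x
      rw [habs0, sq_abs]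
    rw [h1]
    have h2 : (∫ w in Ioi (0:ℝ), w ^ 2 * logOddsRatioDensity w)
        = ∫ w in Ioi (0:ℝ), (π ^ 2)⁻¹ * (w ^ 3 / (Real.exp (w / 2) - Real.exp (-(w / 2)))) := by
      refine setIntegral_congr_fun measurableSet_Ioi (fun x hx => ?_)
      have := hIoi 3 (by norm_num) x hx
      simpa using this
    rw [h2, integral_const_mul, integral_Ioi_key 3 hasSum_odd_four]
    have hf : ((Nat.factorial 3 : ℕ) : ℝ) = 6 := by norm_num [Nat.factorial]
    rw [hf]
    field_simp
    ring_nf
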